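/- For all nonnegative integers k and j, the Legendre-Stirling numbers with odd first index satisfy {2k+1 brace j}_1 = Σ_{μ=0}^{k} C(2k+1, 2μ+1) {k+μ+1 brace j}_{1/2}. -/

import Mathlib

noncomputable def LS : ℕ → ℕ → ℝ
  | 0, 0 => 1
  | 0, _ + 1 => 0
  | _ + 1, 0 => 0
  | n + 1, j + 1 => LS n j + ((j:ℝ) + 1) * ((j:ℝ) + 2) * LS n (j + 1)

noncomputable def CS : ℕ → ℕ → ℝ
  | 0, 0 => 1
  | 0, _ + 1 => 0
  | _ + 1, 0 => 0
  | n + 1, j + 1 => CS n j + ((j:ℝ) + 1) ^ 2 * CS n (j + 1)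

lemma CS_succ_zero (n : ℕ) : CS (n+1) 0 = 0 := rfl
lemma CS_succ_succ (n j : ℕ) : CS (n+1) (j+1) = CS n j + ((j:ℝ)+1)^2 * CS n (j+1) := rfl
lemma LS_succ_zero (n : ℕ) : LS (n+1) 0 = 0 := rfl
lemma LS_succ_succ (n j : ℕ) : LS (n+1) (j+1) = LS n j + ((j:ℝ)+1) * ((j:ℝ)+2) * LS n (j+1) := rfl

lemma cast_pascal (n m : ℕ) : ((n+1).choose (m+1) : ℝ) = (n.choose m : ℝ) + (n.choose (m+1) : ℝ) := by
  rw [Nat.choose_succ_succ]; push_cast; ring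

lemma stepA (k : ℕ)
    (hB : ∀ j, LS (2*k) j = ∑ μ ∈ Finset.range (k+1), ((2*k).choose (2*μ) : ℝ) * CS (k+μ) j)
    (hB' : ∀ j, (∑ μ ∈ Finset.range (k+1), ((2*k).choose (2*μ+1) : ℝ) * CS (k+μ+1) j) = (j:ℝ) * LS (2*k) j) :
    (∀ j, LS (2*k+1) j = ∑ μ ∈ Finset.range (k+1), ((2*k+1).choose (2*μ+1) : ℝ) * CS (k+μ+1) j) ∧
    (∀ j, (∑ μ ∈ Finset.range (k+1), ((2*k+1).choose (2*μ) : ℝ) * CS (k+μ+1) j) = (j:ℝ) * LS (2*k+1) j) := by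
  -- M sum: even binomials, CS index shifted by one
  have hM : ∀ i, (∑ μ ∈ Finset.range (k+1), ((2*k).choose (2*μ) : ℝ) * CS (k+μ+1) (i+1))
      = LS (2*k) i + ((i:ℝ)+1)^2 * LS (2*k) (i+1) := by
    intro i
    calc (∑ μ ∈ Finset.range (k+1), ((2*k).choose (2*μ) : ℝ) * CS (k+μ+1) (i+1))
        = (∑ μ ∈ Finset.range (k+1), ((2*k).choose (2*μ) : ℝ) * CS (k+μ) i)
          + ((i:ℝ)+1)^2 * ∑ μ ∈ Finset.range (k+1), ((2*k).choose (2*μ) : ℝ) * CS (k+μ) (i+1) := by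
          rw [Finset.mul_sum, ← Finset.sum_add_distrib]
          exact Finset.sum_congr rfl fun μ _ => by rw [CS_succ_succ]; ring
      _ = LS (2*k) i + ((i:ℝ)+1)^2 * LS (2*k) (i+1) := by rw [← hB i, ← hB (i+1)]
  constructor
  · intro j
    have split : (∑ μ ∈ Finset.range (k+1), ((2*k+1).choose (2*μ+1) : ℝ) * CS (k+μ+1) j)
        = (∑ μ ∈ Finset.range (k+1), ((2*k).choose (2*μ) : ℝ) * CS (k+μ+1) j)
          + ∑ μ ∈ Finset.range (k+1), ((2*k).choose (2*μ+1) : ℝ) * CS (k+μ+1) j := by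
      rw [← Finset.sum_add_distrib]
      exact Finset.sum_congr rfl fun μ _ => by rw [cast_pascal]; ring
    cases j with
    | zero => simp [LS_succ_zero, CS_succ_zero]
    | succ i =>
      rw [split, hM i, hB' (i+1), LS_succ_succ]
      push_cast; ring
  · intro j
    cases j with
    | zero => simp [CS_succ_zero]
    | succ i =>
      have peel : (∑ μ ∈ Finset.range (k+1), ((2*k+1).choose (2*μ) : ℝ) * CS (k+μ+1) (i+1))
          = (∑ μ ∈ Finset.range k, ((2*k+1).choose (2*μ+2) : ℝ) * CS (k+μ+2) (i+1)) + CS (k+1) (i+1) := by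
        have e : ∀ μ ∈ Finset.range k, ((2*k+1).choose (2*(μ+1)) : ℝ) * CS (k+(μ+1)+1) (i+1)
            = ((2*k+1).choose (2*μ+2) : ℝ) * CS (k+μ+2) (i+1) := by
          intro μ _
          rw [show 2*(μ+1) = 2*μ+2 by ring, show k+(μ+1)+1 = k+μ+2 by omega]
        rw [Finset.sum_range_succ', Finset.sum_congr rfl e]
        norm_num
      have split2 : (∑ μ ∈ Finset.range k, ((2*k+1).choose (2*μ+2) : ℝ) * CS (k+μ+2) (i+1))
          = (∑ μ ∈ Finset.range k, ((2*k).choose (2*μ+1) : ℝ) * CS (k+μ+2) (i+1))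
            + ∑ μ ∈ Finset.range k, ((2*k).choose (2*μ+2) : ℝ) * CS (k+μ+2) (i+1) := by
        rw [← Finset.sum_add_distrib]
        exact Finset.sum_congr rfl fun μ _ => by
          have h : 2*μ+2 = (2*μ+1)+1 := by omega
          rw [h, cast_pascal]; ring
      have ext1 : (∑ μ ∈ Finset.range k, ((2*k).choose (2*μ+1) : ℝ) * CS (k+μ+2) (i+1))
          = ∑ μ ∈ Finset.range (k+1), ((2*k).choose (2*μ+1) : ℝ) * CS (k+μ+2) (i+1) := by
        rw [Finset.sum_range_succ]
        have h0 : (2*k).choose (2*k+1) = 0 := Nat.choose_eq_zero_of_lt (by omega)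
        rw [h0]; norm_num
      have unpeel : (∑ μ ∈ Finset.range k, ((2*k).choose (2*μ+2) : ℝ) * CS (k+μ+2) (i+1)) + CS (k+1) (i+1)
          = ∑ μ ∈ Finset.range (k+1), ((2*k).choose (2*μ) : ℝ) * CS (k+μ+1) (i+1) := by
        have e : ∀ μ ∈ Finset.range k, ((2*k).choose (2*(μ+1)) : ℝ) * CS (k+(μ+1)+1) (i+1)
            = ((2*k).choose (2*μ+2) : ℝ) * CS (k+μ+2) (i+1) := by
          intro μ _
          rw [show 2*(μ+1) = 2*μ+2 by ring, show k+(μ+1)+1 = k+μ+2 by omega]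
        rw [Finset.sum_range_succ', Finset.sum_congr rfl e]
        norm_num
      have hO2 : (∑ μ ∈ Finset.range (k+1), ((2*k).choose (2*μ+1) : ℝ) * CS (k+μ+2) (i+1))
          = (i:ℝ) * LS (2*k) i + ((i:ℝ)+1)^2 * (((i:ℝ)+1) * LS (2*k) (i+1)) := by
        calc (∑ μ ∈ Finset.range (k+1), ((2*k).choose (2*μ+1) : ℝ) * CS (k+μ+2) (i+1))
            = (∑ μ ∈ Finset.range (k+1), ((2*k).choose (2*μ+1) : ℝ) * CS (k+μ+1) i)
              + ((i:ℝ)+1)^2 * ∑ μ ∈ Finset.range (k+1), ((2*k).choose (2*μ+1) : ℝ) * CS (k+μ+1) (i+1) := by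
              rw [Finset.mul_sum, ← Finset.sum_add_distrib]
              exact Finset.sum_congr rfl fun μ _ => by
                have h : k+μ+2 = (k+μ+1)+1 := by omega
                rw [h, CS_succ_succ]; ring
          _ = _ := by rw [hB' i, hB' (i+1)]; push_cast; ring
      rw [peel, split2, ext1, add_assoc, unpeel, hO2, hM i, LS_succ_succ]
      push_cast; ring
lemma stepB (k : ℕ)
    (hA : ∀ j, LS (2*k+1) j = ∑ μ ∈ Finset.range (k+1), ((2*k+1).choose (2*μ+1) : ℝ) * CS (k+μ+1) j)
    (hA' : ∀ j, (∑ μ ∈ Finset.range (k+1), ((2*k+1).choose (2*μ) : ℝ) * CS (k+μ+1) j) = (j:ℝ) * LS (2*k+1) j) :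
    (∀ j, LS (2*k+1+1) j = ∑ μ ∈ Finset.range (k+1+1), ((2*k+1+1).choose (2*μ) : ℝ) * CS (k+μ+1) j) ∧
    (∀ j, (∑ μ ∈ Finset.range (k+1+1), ((2*k+1+1).choose (2*μ+1) : ℝ) * CS (k+μ+1+1) j) = (j:ℝ) * LS (2*k+1+1) j) := by
  have hAsum : ∀ i, (∑ μ ∈ Finset.range (k+1), ((2*k+1).choose (2*μ+1) : ℝ) * CS (k+μ+1+1) (i+1))
      = LS (2*k+1) i + ((i:ℝ)+1)^2 * LS (2*k+1) (i+1) := by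
    intro i
    calc (∑ μ ∈ Finset.range (k+1), ((2*k+1).choose (2*μ+1) : ℝ) * CS (k+μ+1+1) (i+1))
        = (∑ μ ∈ Finset.range (k+1), ((2*k+1).choose (2*μ+1) : ℝ) * CS (k+μ+1) i)
          + ((i:ℝ)+1)^2 * ∑ μ ∈ Finset.range (k+1), ((2*k+1).choose (2*μ+1) : ℝ) * CS (k+μ+1) (i+1) := by
          rw [Finset.mul_sum, ← Finset.sum_add_distrib]
          exact Finset.sum_congr rfl fun μ _ => by rw [CS_succ_succ]; ring
      _ = _ := by rw [← hA i, ← hA (i+1)]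
  have hA'sum : ∀ i, (∑ μ ∈ Finset.range (k+1), ((2*k+1).choose (2*μ) : ℝ) * CS (k+μ+1+1) (i+1))
      = (i:ℝ) * LS (2*k+1) i + ((i:ℝ)+1)^2 * (((i:ℝ)+1) * LS (2*k+1) (i+1)) := by
    intro i
    calc (∑ μ ∈ Finset.range (k+1), ((2*k+1).choose (2*μ) : ℝ) * CS (k+μ+1+1) (i+1))
        = (∑ μ ∈ Finset.range (k+1), ((2*k+1).choose (2*μ) : ℝ) * CS (k+μ+1) i)
          + ((i:ℝ)+1)^2 * ∑ μ ∈ Finset.range (k+1), ((2*k+1).choose (2*μ) : ℝ) * CS (k+μ+1) (i+1) := by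
          rw [Finset.mul_sum, ← Finset.sum_add_distrib]
          exact Finset.sum_congr rfl fun μ _ => by rw [CS_succ_succ]; ring
      _ = _ := by rw [hA' i, hA' (i+1)]; push_cast; ring
  constructor
  · intro j
    cases j with
    | zero => simp [LS_succ_zero, CS_succ_zero]
    | succ i =>
      have peel : (∑ μ ∈ Finset.range (k+1+1), ((2*k+1+1).choose (2*μ) : ℝ) * CS (k+μ+1) (i+1))
          = (∑ μ ∈ Finset.range (k+1), ((2*k+1+1).choose (2*μ+1+1) : ℝ) * CS (k+μ+1+1) (i+1)) + CS (k+1) (i+1) := by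
        have e : ∀ μ ∈ Finset.range (k+1), ((2*k+1+1).choose (2*(μ+1)) : ℝ) * CS (k+(μ+1)+1) (i+1)
            = ((2*k+1+1).choose (2*μ+1+1) : ℝ) * CS (k+μ+1+1) (i+1) := by
          intro μ _
          rw [show 2*(μ+1) = 2*μ+1+1 by ring, show k+(μ+1)+1 = k+μ+1+1 by omega]
        rw [Finset.sum_range_succ', Finset.sum_congr rfl e]
        norm_num
      have split : (∑ μ ∈ Finset.range (k+1), ((2*k+1+1).choose (2*μ+1+1) : ℝ) * CS (k+μ+1+1) (i+1))
          = (∑ μ ∈ Finset.range (k+1), ((2*k+1).choose (2*μ+1) : ℝ) * CS (k+μ+1+1) (i+1))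
            + ∑ μ ∈ Finset.range (k+1), ((2*k+1).choose (2*μ+1+1) : ℝ) * CS (k+μ+1+1) (i+1) := by
        rw [← Finset.sum_add_distrib]
        exact Finset.sum_congr rfl fun μ _ => by rw [cast_pascal]; ring
      have unpeel : (∑ μ ∈ Finset.range (k+1+1), ((2*k+1).choose (2*μ) : ℝ) * CS (k+μ+1) (i+1))
          = (∑ μ ∈ Finset.range (k+1), ((2*k+1).choose (2*μ+1+1) : ℝ) * CS (k+μ+1+1) (i+1)) + CS (k+1) (i+1) := by
        have e : ∀ μ ∈ Finset.range (k+1), ((2*k+1).choose (2*(μ+1)) : ℝ) * CS (k+(μ+1)+1) (i+1)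
            = ((2*k+1).choose (2*μ+1+1) : ℝ) * CS (k+μ+1+1) (i+1) := by
          intro μ _
          rw [show 2*(μ+1) = 2*μ+1+1 by ring, show k+(μ+1)+1 = k+μ+1+1 by omega]
        rw [Finset.sum_range_succ', Finset.sum_congr rfl e]
        norm_num
      have drop : (∑ μ ∈ Finset.range (k+1+1), ((2*k+1).choose (2*μ) : ℝ) * CS (k+μ+1) (i+1))
          = ∑ μ ∈ Finset.range (k+1), ((2*k+1).choose (2*μ) : ℝ) * CS (k+μ+1) (i+1) := by
        rw [Finset.sum_range_succ]
        have h0 : (2*k+1).choose (2*(k+1)) = 0 := Nat.choose_eq_zero_of_lt (by omega)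
        rw [h0]; norm_num
      have hBC : (∑ μ ∈ Finset.range (k+1), ((2*k+1).choose (2*μ+1+1) : ℝ) * CS (k+μ+1+1) (i+1)) + CS (k+1) (i+1)
          = ((i:ℝ)+1) * LS (2*k+1) (i+1) := by
        rw [← unpeel, drop, hA' (i+1)]; push_cast; ring
      have target : LS (2*k+1+1) (i+1)
          = LS (2*k+1) i + ((i:ℝ)+1) * ((i:ℝ)+2) * LS (2*k+1) (i+1) := LS_succ_succ (2*k+1) i
      rw [peel, split, hAsum i, target]
      linear_combination -hBC
  · intro j
    cases j with
    | zero => simp [CS_succ_zero]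
    | succ i =>
      have drop : (∑ μ ∈ Finset.range (k+1+1), ((2*k+1+1).choose (2*μ+1) : ℝ) * CS (k+μ+1+1) (i+1))
          = ∑ μ ∈ Finset.range (k+1), ((2*k+1+1).choose (2*μ+1) : ℝ) * CS (k+μ+1+1) (i+1) := by
        rw [Finset.sum_range_succ]
        have h0 : (2*k+1+1).choose (2*(k+1)+1) = 0 := Nat.choose_eq_zero_of_lt (by omega)
        rw [h0]; norm_num
      have split : (∑ μ ∈ Finset.range (k+1), ((2*k+1+1).choose (2*μ+1) : ℝ) * CS (k+μ+1+1) (i+1))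
          = (∑ μ ∈ Finset.range (k+1), ((2*k+1).choose (2*μ) : ℝ) * CS (k+μ+1+1) (i+1))
            + ∑ μ ∈ Finset.range (k+1), ((2*k+1).choose (2*μ+1) : ℝ) * CS (k+μ+1+1) (i+1) := by
        rw [← Finset.sum_add_distrib]
        exact Finset.sum_congr rfl fun μ _ => by rw [cast_pascal]; ring
      have target : LS (2*k+1+1) (i+1)
          = LS (2*k+1) i + ((i:ℝ)+1) * ((i:ℝ)+2) * LS (2*k+1) (i+1) := LS_succ_succ (2*k+1) i
      rw [drop, split, hAsum i, hA'sum i, target]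
      push_cast; ring

lemma key (k : ℕ) :
    (∀ j, LS (2*k) j = ∑ μ ∈ Finset.range (k+1), ((2*k).choose (2*μ) : ℝ) * CS (k+μ) j) ∧
    (∀ j, (∑ μ ∈ Finset.range (k+1), ((2*k).choose (2*μ+1) : ℝ) * CS (k+μ+1) j) = (j:ℝ) * LS (2*k) j) := by
  induction k with
  | zero =>
    constructor
    · intro j
      rw [Finset.sum_range_one]
      norm_num
      cases j <;> rfl
    · intro j
      rw [Finset.sum_range_one]
      cases j with
      | zero => simp
      | succ i =>
        rw [show LS (2*0) (i+1) = 0 from rfl]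
        norm_num
  | succ k ih =>
    obtain ⟨hB, hB'⟩ := ih
    obtain ⟨hA, hA'⟩ := stepA k hB hB'
    obtain ⟨hN, hN'⟩ := stepB k hA hA'
    constructor
    · intro j
      rw [show 2*(k+1) = 2*k+1+1 by ring, hN j]
      exact Finset.sum_congr rfl fun μ _ => by rw [show k+μ+1 = k+1+μ by omega]
    · intro j
      rw [show 2*(k+1) = 2*k+1+1 by ring, ← hN' j]
      exact Finset.sum_congr rfl fun μ _ => by rw [show k+1+μ+1 = k+μ+1+1 by omega]

theorem ls_odd_connection (k j : ℕ) :
    LS (2 * k + 1) j =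
      ∑ μ ∈ Finset.range (k + 1),
        (Nat.choose (2 * k + 1) (2 * μ + 1) : ℝ) * CS (k + μ + 1) j := by
  obtain ⟨hB, hB'⟩ := key k
  exact (stepA k hB hB').1 j
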